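/- arXiv:1604.03932 — 2 statements merged into one kernel-verified Lean document; each statement's English description precedes it below -/
import Mathlib

section
/- For integers 1 ≤ q ≤ p−1 and δ, δ' > 0 with (p+1)δ = (q+1)δ' and (p+2)δ ≤ 1, one has (pδ)^{(p+1)m} ≤ (2e)^m (qδ')^{(q+1)m} for any m ∈ ℕ. -/
open Real

/-- For 1 ≤ q ≤ p−1, (p+1)δ = (q+1)δ' and (p+2)δ ≤ 1:
(pδ)^{(p+1)m} ≤ (2e)^m (qδ')^{(q+1)m}. -/
theorem delta_power_comparison
    (p q m : ℕ) (hq1 : 1 ≤ q) (hqp : q ≤ p - 1) (hp : 1 ≤ p) (hm : 1 ≤ m)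
    (δ δ' : ℝ) (hδ : 0 < δ) (hδ' : 0 < δ')
    (heq : ((p : ℝ) + 1) * δ = ((q : ℝ) + 1) * δ')
    (hle : ((p : ℝ) + 2) * δ ≤ 1) :
    ((p : ℝ) * δ) ^ ((p + 1) * m) ≤
      (2 * Real.exp 1) ^ m * ((q : ℝ) * δ') ^ ((q + 1) * m) := by
  have hq0 : (1:ℝ) ≤ (q:ℝ) := by exact_mod_cast hq1
  have hqpos : (0:ℝ) < (q:ℝ) := by linarith
  set c : ℝ := 1 + 1/(q:ℝ) with hc
  have hA0 : (0:ℝ) ≤ (p:ℝ) * δ := by positivity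
  have hA1 : (p:ℝ) * δ ≤ 1 := by nlinarith [hδ.le]
  have h1 : ((p:ℝ)*δ)^(p+1) ≤ ((p:ℝ)*δ)^(q+1) :=
    pow_le_pow_of_le_one hA0 hA1 (by omega)
  have h2 : (p:ℝ)*δ ≤ ((q:ℝ)+1)*δ' := by nlinarith
  have h3 : ((p:ℝ)*δ)^(q+1) ≤ (((q:ℝ)+1)*δ')^(q+1) := pow_le_pow_left₀ hA0 h2 _
  have hcq : ((q:ℝ)+1)*δ' = c * ((q:ℝ)*δ') := by
    rw [hc, one_div, ← mul_assoc, add_mul 1 ((q:ℝ)⁻¹) (q:ℝ), inv_mul_cancel₀ hqpos.ne']; ring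
  have hcpos : (0:ℝ) ≤ c := by positivity
  have hce : c^q ≤ Real.exp 1 := by
    calc c^q ≤ (Real.exp (1/(q:ℝ)))^q := by
          apply pow_le_pow_left₀ hcpos
          have := Real.add_one_le_exp (1/(q:ℝ))
          linarith
      _ = Real.exp 1 := by
          rw [← Real.exp_nat_mul]
          congr 1
          field_simp
  have hc2 : c ≤ 2 := by
    rw [hc]
    have : 1/(q:ℝ) ≤ 1 := by
      rw [div_le_one hqpos]; exact hq0
    linarith
  have h4 : (((q:ℝ)+1)*δ')^(q+1) ≤ 2 * Real.exp 1 * ((q:ℝ)*δ')^(q+1) := by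
    rw [hcq, mul_pow, pow_succ]
    have hB : (0:ℝ) ≤ ((q:ℝ)*δ')^(q+1) := by positivity
    have : c^q * c ≤ Real.exp 1 * 2 := by
      have h5 : c ^ q * c ≤ Real.exp 1 * c :=
        mul_le_mul_of_nonneg_right hce hcpos
      have h6 : Real.exp 1 * c ≤ Real.exp 1 * 2 :=
        mul_le_mul_of_nonneg_left hc2 (Real.exp_pos 1).le
      linarith
    nlinarith [this, hB]
  have base : ((p:ℝ)*δ)^(p+1) ≤ 2 * Real.exp 1 * ((q:ℝ)*δ')^(q+1) :=
    le_trans h1 (le_trans h3 h4)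
  calc ((p:ℝ)*δ)^((p+1)*m) = (((p:ℝ)*δ)^(p+1))^m := by rw [pow_mul]
    _ ≤ (2 * Real.exp 1 * ((q:ℝ)*δ')^(q+1))^m :=
        pow_le_pow_left₀ (by positivity) base m
    _ = (2 * Real.exp 1)^m * ((q:ℝ)*δ')^((q+1)*m) := by
        rw [mul_pow, ← pow_mul]
end

section
/- If ω is a weight function satisfying (α₀) (i.e., there exist C > 0 and t₀ > 0 such that ω(λt) ≤ λ C ω(t) for all λ ≥ 1 and t ≥ t₀), then ω is equivalent to a subadditive weight function; more precisely there exists a concave increasing function κ: [0,∞) → [0,∞) and constants A, B > 0 with κ(t) ≤ A ω(t) + A and ω(t) ≤ B κ(t) + B for all t ≥ 0. -/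
open Real Set Asymptotics Filter

/-- If a weight function ω satisfies (α₀), then ω is equivalent to a concave
(subadditive) increasing weight: there are a concave increasing κ and A, B > 0
with κ(t) ≤ A ω(t) + A and ω(t) ≤ B κ(t) + B for all t ≥ 0. -/
theorem alpha0_implies_equiv_subadditive
    (ω : ℝ → ℝ)
    (hcont : ContinuousOn ω (Set.Ici 0))
    (hmono : MonotoneOn ω (Set.Ici 0))
    (hnonneg : ∀ t ≥ (0:ℝ), 0 ≤ ω t)
    (L : ℝ) (hL : 0 < L) (halpha : ∀ t ≥ (0:ℝ), ω (2 * t) ≤ L * (ω t + 1))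
    (hlog : Real.log =o[atTop] ω)
    (hconv : ConvexOn ℝ Set.univ (fun t => ω (Real.exp t)))
    (C t₀ : ℝ) (hC : 0 < C) (ht₀ : 0 < t₀)
    (halpha0 : ∀ lam ≥ (1:ℝ), ∀ t ≥ t₀, ω (lam * t) ≤ lam * C * ω t) :
    ∃ κ : ℝ → ℝ, ConcaveOn ℝ (Set.Ici 0) κ ∧ MonotoneOn κ (Set.Ici 0) ∧
      (∀ t ≥ (0:ℝ), 0 ≤ κ t) ∧
      ∃ A > (0:ℝ), ∃ B > (0:ℝ),
        (∀ t ≥ (0:ℝ), κ t ≤ A * ω t + A) ∧ (∀ t ≥ (0:ℝ), ω t ≤ B * κ t + B) := by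
  classical
  set C' : ℝ := max C 1 with hC'def
  have hC'1 : (1:ℝ) ≤ C' := le_max_right _ _
  have hCC' : C ≤ C' := le_max_left _ _
  have hC'0 : (0:ℝ) < C' := lt_of_lt_of_le one_pos hC'1
  haveI : Nonempty (Set.Ici t₀) := ⟨⟨t₀, Set.self_mem_Ici⟩⟩
  set κ : ℝ → ℝ := fun t => ⨅ s : Set.Ici t₀, C' * ω s * (1 + t / s) with hκdef
  have hspos : ∀ s : Set.Ici t₀, (0:ℝ) < (s:ℝ) := fun s => lt_of_lt_of_le ht₀ s.2
  have hωs : ∀ s : Set.Ici t₀, 0 ≤ ω s := fun s => hnonneg s (le_of_lt (hspos s))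
  have hterm : ∀ t : ℝ, 0 ≤ t → ∀ s : Set.Ici t₀, 0 ≤ C' * ω s * (1 + t / (s:ℝ)) := by
    intro t ht s
    have h1 : 0 ≤ t / (s:ℝ) := div_nonneg ht (hspos s).le
    exact mul_nonneg (mul_nonneg hC'0.le (hωs s)) (by linarith)
  have hbdd : ∀ t : ℝ, 0 ≤ t →
      BddBelow (Set.range fun s : Set.Ici t₀ => C' * ω s * (1 + t / (s:ℝ))) := by
    intro t ht
    refine ⟨0, ?_⟩
    rintro x ⟨s, rfl⟩
    exact hterm t ht s
  -- ω ≤ κ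
  have hωκ : ∀ t ≥ (0:ℝ), ω t ≤ κ t := by
    intro t ht
    apply le_ciInf
    intro s
    have hs0 : (0:ℝ) < (s:ℝ) := hspos s
    have hts : 0 ≤ t / (s:ℝ) := div_nonneg ht hs0.le
    rcases le_or_gt t s with h | h
    · have h1 : ω t ≤ ω s := hmono ht (le_trans ht h) h
      nlinarith [hωs s, mul_nonneg (mul_nonneg hC'0.le (hωs s)) hts,
        mul_nonneg (sub_nonneg.mpr hC'1) (hωs s)]
    · have hlam : (1:ℝ) ≤ t / (s:ℝ) := (one_le_div hs0).mpr h.le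
      have h2 := halpha0 (t / s) hlam s s.2
      rw [div_mul_cancel₀ _ (ne_of_gt hs0)] at h2
      nlinarith [mul_nonneg (mul_nonneg (sub_nonneg.mpr hCC') hts) (hωs s),
        mul_nonneg hC'0.le (hωs s)]
  -- upper bound on κ at particular points
  have hκle : ∀ t : ℝ, 0 ≤ t → ∀ s : Set.Ici t₀, κ t ≤ C' * ω s * (1 + t / (s:ℝ)) :=
    fun t ht s => ciInf_le (hbdd t ht) s
  -- nonneg
  have hκnn : ∀ t ≥ (0:ℝ), 0 ≤ κ t := fun t ht => le_trans (hnonneg t ht) (hωκ t ht)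
  -- monotone
  have hκmono : MonotoneOn κ (Set.Ici 0) := by
    intro a ha b hb hab
    apply le_ciInf
    intro s
    refine le_trans (hκle a ha s) ?_
    have hs0 : (0:ℝ) < (s:ℝ) := hspos s
    have hdiv : a / (s:ℝ) ≤ b / (s:ℝ) := by gcongr
    exact mul_le_mul_of_nonneg_left (by linarith) (mul_nonneg hC'0.le (hωs s))
  -- concave
  have hκconc : ConcaveOn ℝ (Set.Ici 0) κ := by
    refine ⟨convex_Ici 0, ?_⟩
    intro x hx y hy a b ha hb hab
    have hx0 : (0:ℝ) ≤ x := hx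
    have hy0 : (0:ℝ) ≤ y := hy
    have hxy : (0:ℝ) ≤ a * x + b * y := by positivity
    apply le_ciInf
    intro s
    have hs0 : (0:ℝ) < (s:ℝ) := hspos s
    have hsne : (s:ℝ) ≠ 0 := ne_of_gt hs0
    have h1 : κ x ≤ C' * ω s * (1 + x / (s:ℝ)) := hκle x hx0 s
    have h2 : κ y ≤ C' * ω s * (1 + y / (s:ℝ)) := hκle y hy0 s
    have key : a * (C' * ω s * (1 + x / (s:ℝ))) + b * (C' * ω s * (1 + y / (s:ℝ)))
        = C' * ω s * (1 + (a * x + b * y) / (s:ℝ)) := by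
      linear_combination (C' * ω (s:ℝ)) * hab
    calc a • κ x + b • κ y ≤ a * (C' * ω s * (1 + x / (s:ℝ)))
          + b * (C' * ω s * (1 + y / (s:ℝ))) := by
          simp only [smul_eq_mul]
          exact add_le_add (mul_le_mul_of_nonneg_left h1 ha)
            (mul_le_mul_of_nonneg_left h2 hb)
      _ = C' * ω s * (1 + (a • x + b • y) / (s:ℝ)) := by
          simp only [smul_eq_mul]; rw [key]
  have hωt₀ : 0 ≤ ω t₀ := hnonneg t₀ ht₀.le
  refine ⟨κ, hκconc, hκmono, hκnn, 2 * C' + 2 * C' * ω t₀,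
    by nlinarith, 1, one_pos, ?_, ?_⟩
  · intro t ht
    have hω0 : 0 ≤ ω t := hnonneg t ht
    rcases le_or_gt t₀ t with h | h
    · have h' : κ t ≤ C' * ω t * (1 + t / t) := hκle t ht ⟨t, h⟩
      have htt : t / t = 1 := div_self (ne_of_gt (lt_of_lt_of_le ht₀ h))
      rw [htt] at h'
      nlinarith [mul_nonneg (mul_nonneg hC'0.le hωt₀) hω0]
    · have h' : κ t ≤ C' * ω t₀ * (1 + t / t₀) := hκle t ht ⟨t₀, Set.self_mem_Ici⟩
      have h1 : t / t₀ ≤ 1 := (div_le_one ht₀).mpr h.le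
      nlinarith [mul_nonneg (mul_nonneg hC'0.le hωt₀) hω0,
        mul_nonneg hC'0.le hω0,
        mul_nonneg (mul_nonneg hC'0.le hωt₀) (by linarith : (0:ℝ) ≤ 1 - t / t₀)]
  · intro t ht
    have := hωκ t ht
    linarith
end
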